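/- arXiv:2112.13239 — 4 statements merged into one kernel-verified Lean document; each statement's English description precedes it below -/
import Mathlib

section
/- Let θ ∈ (0, π/4], μ = arctan(sin 2θ), and α = 2cos(2θ)/√(1+sin²(2θ)). With the ideal observables A_0 = σ_Z, A_1 = σ_X acting on the first qubit and B_0 = cos(μ)σ_Z + sin(μ)σ_X, B_1 = cos(μ)σ_Z − sin(μ)σ_X acting on the second qubit of ℂ²⊗ℂ², define the Bell operators W_0 = α A_0⊗I + A_0⊗B_0 + A_0⊗B_1 + A_1⊗B_0 − A_1⊗B_1, W_1 = −α A_0⊗I + A_0⊗B_0 + A_0⊗B_1 − A_1⊗B_0 + A_1⊗B_1, W_2 = −W_1, and W_3 = −W_0. Then for every b ∈ {0,1,2,3}, ⟨Bell^b_θ| W_b |Bell^b_θ⟩ = √(8+2α²). -/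
open scoped BigOperators Kronecker
open Matrix

noncomputable section

/-- Pauli `σ_Z`. -/
def sZ : Matrix (Fin 2) (Fin 2) ℂ := !![1, 0; 0, -1]

/-- Pauli `σ_X`. -/
def sX : Matrix (Fin 2) (Fin 2) ℂ := !![0, 1; 1, 0]

/-- The ideal second-party observables `B_0 = cos μ σ_Z + sin μ σ_X` and
`B_1 = cos μ σ_Z - sin μ σ_X`. -/
def Bobs (μ : ℝ) (b : Fin 2) : Matrix (Fin 2) (Fin 2) ℂ :=
  if b = 0 then (Real.cos μ : ℂ) • sZ + (Real.sin μ : ℂ) • sX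
  else (Real.cos μ : ℂ) • sZ - (Real.sin μ : ℂ) • sX

/-- The four tilted Bell operators `W_0, W_1, W_2 = -W_1, W_3 = -W_0` built from
`A_0 = σ_Z`, `A_1 = σ_X`, `B_0`, `B_1`. -/
def Wop (α μ : ℝ) (b : Fin 4) : Matrix (Fin 2 × Fin 2) (Fin 2 × Fin 2) ℂ :=
  if b = 0 then
    (α : ℂ) • (sZ ⊗ₖ 1) + sZ ⊗ₖ Bobs μ 0 + sZ ⊗ₖ Bobs μ 1 + sX ⊗ₖ Bobs μ 0 - sX ⊗ₖ Bobs μ 1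
  else if b = 1 then
    -((α : ℂ) • (sZ ⊗ₖ 1)) + sZ ⊗ₖ Bobs μ 0 + sZ ⊗ₖ Bobs μ 1 - sX ⊗ₖ Bobs μ 0 + sX ⊗ₖ Bobs μ 1
  else if b = 2 then
    -(-((α : ℂ) • (sZ ⊗ₖ 1)) + sZ ⊗ₖ Bobs μ 0 + sZ ⊗ₖ Bobs μ 1 - sX ⊗ₖ Bobs μ 0 +
        sX ⊗ₖ Bobs μ 1)
  else
    -((α : ℂ) • (sZ ⊗ₖ 1) + sZ ⊗ₖ Bobs μ 0 + sZ ⊗ₖ Bobs μ 1 + sX ⊗ₖ Bobs μ 0 - sX ⊗ₖ Bobs μ 1)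

/-- The four tilted Bell states. -/
def bellV (θ : ℝ) (b : Fin 4) : Fin 2 × Fin 2 → ℂ :=
  fun p =>
    if b = 0 then
      (if p = (0, 0) then (Real.cos θ : ℂ) else if p = (1, 1) then (Real.sin θ : ℂ) else 0)
    else if b = 1 then
      (if p = (0, 0) then (Real.sin θ : ℂ) else if p = (1, 1) then -(Real.cos θ : ℂ) else 0)
    else if b = 2 then
      (if p = (0, 1) then (Real.cos θ : ℂ) else if p = (1, 0) then (Real.sin θ : ℂ) else 0)
    else
      (if p = (0, 1) then (Real.sin θ : ℂ) else if p = (1, 0) then -(Real.cos θ : ℂ) else 0)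

lemma key (θ μ α : ℝ)
    (hμ : μ = Real.arctan (Real.sin (2 * θ)))
    (hα : α = 2 * Real.cos (2 * θ) / Real.sqrt (1 + Real.sin (2 * θ) ^ 2)) :
    α * (Real.cos θ ^ 2 - Real.sin θ ^ 2) + 2 * Real.cos μ
      + 4 * Real.sin μ * Real.sin θ * Real.cos θ = Real.sqrt (8 + 2 * α ^ 2) := by
  have ht : (0:ℝ) < 1 + Real.sin (2*θ) ^ 2 := by positivity
  set t := Real.sin (2*θ) with htdef
  set q := Real.sqrt (1 + t^2) with hqdef
  have hq0 : 0 < q := Real.sqrt_pos.mpr ht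
  have hq2 : q ^ 2 = 1 + t ^ 2 := Real.sq_sqrt ht.le
  have hcos : Real.cos μ = 1 / q := by rw [hμ, Real.cos_arctan]
  have hsin : Real.sin μ = t / q := by rw [hμ, Real.sin_arctan]
  have hc2 : Real.cos (2*θ) = Real.cos θ ^ 2 - Real.sin θ ^ 2 := by
    rw [Real.cos_two_mul]; nlinarith [Real.sin_sq_add_cos_sq θ]
  have hs2 : t = 2 * Real.sin θ * Real.cos θ := by rw [htdef, Real.sin_two_mul]
  have hpyth : t ^ 2 + Real.cos (2*θ) ^ 2 = 1 := by
    rw [htdef]; exact Real.sin_sq_add_cos_sq _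
  have hrhs : Real.sqrt (8 + 2 * α ^ 2) = 4 / q := by
    have : 8 + 2 * α ^ 2 = (4 / q) ^ 2 := by
      rw [hα, hqdef]
      field_simp
      nlinarith [hq2, hpyth]
    rw [this, Real.sqrt_sq (by positivity)]
  rw [hrhs, hα, hcos, hsin, hc2]
  field_simp
  rw [hc2] at hpyth
  have h4 : 4 * t * Real.sin θ * Real.cos θ = 2 * t ^ 2 := by rw [hs2]; ring
  nlinarith [hpyth, h4]

set_option maxHeartbeats 1000000 in
/-- each tilted Bell state achieves the value `√(8+2α²)` on its tilted
Bell operator: `⟨Bell^b_θ| W_b |Bell^b_θ⟩ = √(8+2α²)` for every `b ∈ {0,1,2,3}`. -/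
theorem stmt_3 (θ μ α : ℝ) (hθ : θ ∈ Set.Ioc 0 (Real.pi / 4))
    (hμ : μ = Real.arctan (Real.sin (2 * θ)))
    (hα : α = 2 * Real.cos (2 * θ) / Real.sqrt (1 + Real.sin (2 * θ) ^ 2)) :
    ∀ b : Fin 4,
      star (bellV θ b) ⬝ᵥ (Wop α μ b).mulVec (bellV θ b) =
        (Real.sqrt (8 + 2 * α ^ 2) : ℂ) := by
  have h := key θ μ α hμ hα
  intro b
  fin_cases b <;>
  · simp [Wop, Bobs, sZ, sX, bellV, dotProduct, Matrix.mulVec, Fintype.sum_prod_type, Fin.sum_univ_succ,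
      Matrix.kroneckerMap_apply, Matrix.one_apply, Complex.conj_ofReal,
      -Complex.ofReal_cos, -Complex.ofReal_sin]
    rw [← h]
    push_cast [-Complex.ofReal_cos, -Complex.ofReal_sin]
    have hsc : ((Real.sin θ : ℂ)) ^ 2 + ((Real.cos θ : ℂ)) ^ 2 = 1 := by
      exact_mod_cast congrArg (fun x : ℝ => (x : ℂ)) (Real.sin_sq_add_cos_sq θ)
    linear_combination (2 * (Real.cos μ : ℂ)) * hsc

end
end

section
/- Let θ ∈ (0, π/4], μ = arctan(sin 2θ), and α = 2cos(2θ)/√(1+sin²(2θ)). With the ideal observables A_0 = σ_Z, A_1 = σ_X on the first qubit and B_0 = cos(μ)σ_Z + sin(μ)σ_X, B_1 = cos(μ)σ_Z − sin(μ)σ_X on the second qubit, define the Bell operators W_0 = α A_0⊗I + A_0⊗B_0 + A_0⊗B_1 + A_1⊗B_0 − A_1⊗B_1, W_1 = −α A_0⊗I + A_0⊗B_0 + A_0⊗B_1 − A_1⊗B_0 + A_1⊗B_1, W_2 = −W_1, W_3 = −W_0, each a Hermitian 4×4 matrix. Then for every b ∈ {0,1,2,3}: √(8+2α²) is an eigenvalue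 of W_b with eigenvector |Bell^b_θ⟩, it is the largest eigenvalue of W_b, and the corresponding eigenspace is one-dimensional (the eigenvalue is nondegenerate). -/
open scoped BigOperators Kronecker
open Matrix

noncomputable section

/-- Spectral argument: if a Hermitian matrix has a family of eigenvectors forming a
complete system, the eigenvalue strictly dominating the others is the largest eigenvalue
and its eigenspace is spanned by the corresponding eigenvector. -/
lemma spectral_aux {n m : Type*} [Fintype n] [Fintype m] [DecidableEq n]
    (M : Matrix n n ℂ) (hM : M.IsHermitian)
    (u : m → n → ℂ) (lam : m → ℝ)
    (heig : ∀ i, M.mulVec (u i) = (lam i : ℂ) • u i)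
    (hcomp : ∀ p q, ∑ i, u i q * (starRingEnd ℂ) (u i p) = if p = q then 1 else 0)
    (b : m) (hstrict : ∀ i, i ≠ b → lam i < lam b) :
    (∀ (t : ℝ) (v : n → ℂ), v ≠ 0 → M.mulVec v = (t : ℂ) • v → t ≤ lam b) ∧
    (∀ v : n → ℂ, M.mulVec v = ((lam b : ℝ) : ℂ) • v → ∃ z : ℂ, v = z • u b) := by
  have hdecomp : ∀ (v : n → ℂ) (q : n),
      ∑ i, (∑ p, (starRingEnd ℂ) (u i p) * v p) * u i q = v q := by
    intro v q
    calc ∑ i, (∑ p, (starRingEnd ℂ) (u i p) * v p) * u i q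
        = ∑ p, (∑ i, u i q * (starRingEnd ℂ) (u i p)) * v p := by
          simp_rw [Finset.sum_mul]
          rw [Finset.sum_comm]
          congr 1; ext p; congr 1; ext i; ring
      _ = ∑ p, (if p = q then (1:ℂ) else 0) * v p := by simp_rw [hcomp]
      _ = v q := by simp
  have hproj : ∀ (t : ℝ) (v : n → ℂ), M.mulVec v = (t : ℂ) • v →
      ∀ i, ((lam i : ℂ) - t) * (∑ p, (starRingEnd ℂ) (u i p) * v p) = 0 := by
    intro t v hv i
    have h1 : star (u i) ⬝ᵥ M.mulVec v = (lam i : ℂ) * (star (u i) ⬝ᵥ v) := by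
      rw [Matrix.dotProduct_mulVec]
      have h2 : star (u i) ᵥ* M = (lam i : ℂ) • star (u i) := by
        have := congrArg star (heig i)
        rw [Matrix.star_mulVec, hM.eq] at this
        rw [this, star_smul]
        simp
      rw [h2, smul_dotProduct]
      simp
    have h3 : star (u i) ⬝ᵥ M.mulVec v = (t : ℂ) * (star (u i) ⬝ᵥ v) := by
      rw [hv, dotProduct_smul]; simp
    have h4 : star (u i) ⬝ᵥ v = ∑ p, (starRingEnd ℂ) (u i p) * v p := by
      simp [dotProduct, Pi.star_apply, RCLike.star_def]
    rw [h4] at h1 h3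
    rw [sub_mul]
    rw [h1] at h3
    linear_combination h3
  constructor
  · intro t v hv0 hv
    by_contra hlt
    push_neg at hlt
    have hc0 : ∀ i, (∑ p, (starRingEnd ℂ) (u i p) * v p) = 0 := by
      intro i
      have := hproj t v hv i
      rcases mul_eq_zero.mp this with h | h
      · exfalso
        have : (lam i : ℂ) = (t : ℂ) := by linear_combination h
        have hit : lam i = t := by exact_mod_cast this
        rcases eq_or_ne i b with rfl | hib
        · exact absurd hit.ge (by linarith)
        · have := hstrict i hib; linarith
      · exact h
    apply hv0
    funext q
    rw [← hdecomp v q]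
    simp [hc0]
  · intro v hv
    refine ⟨∑ p, (starRingEnd ℂ) (u b p) * v p, ?_⟩
    funext q
    rw [← hdecomp v q]
    rw [Finset.sum_eq_single (M := ℂ) b ?h1 ?h2]
    · simp [mul_comm]
    case h1 =>
      intro i _ hib
      have := hproj (lam b) v hv i
      rcases mul_eq_zero.mp this with h | h
      · exfalso
        have : (lam i : ℂ) = (lam b : ℂ) := by linear_combination h
        have hit : lam i = lam b := by exact_mod_cast this
        exact absurd hit (hstrict i hib).ne
      · simp [h]
    case h2 =>
      intro h
      exact absurd (Finset.mem_univ b) h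

set_option maxHeartbeats 2000000 in
/-- each `W_b` is Hermitian, `√(8+2α²)` is an eigenvalue of `W_b` with
eigenvector `|Bell^b_θ⟩`, it is the largest eigenvalue, and its eigenspace is
one-dimensional (the eigenvalue is nondegenerate). -/
theorem stmt_4 (θ μ α : ℝ) (hθ : θ ∈ Set.Ioc 0 (Real.pi / 4))
    (hμ : μ = Real.arctan (Real.sin (2 * θ)))
    (hα : α = 2 * Real.cos (2 * θ) / Real.sqrt (1 + Real.sin (2 * θ) ^ 2)) :
    ∀ b : Fin 4,
      (Wop α μ b).IsHermitian ∧
      (Wop α μ b).mulVec (bellV θ b) =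
        (Real.sqrt (8 + 2 * α ^ 2) : ℂ) • bellV θ b ∧
      (∀ (t : ℝ) (v : Fin 2 × Fin 2 → ℂ), v ≠ 0 →
        (Wop α μ b).mulVec v = (t : ℂ) • v → t ≤ Real.sqrt (8 + 2 * α ^ 2)) ∧
      (∀ v : Fin 2 × Fin 2 → ℂ,
        (Wop α μ b).mulVec v = (Real.sqrt (8 + 2 * α ^ 2) : ℂ) • v →
          ∃ z : ℂ, v = z • bellV θ b) := by
  set R := Real.sqrt (1 + Real.sin (2 * θ) ^ 2) with hRdef
  have hR0 : 0 < R := Real.sqrt_pos.mpr (by positivity)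
  have hR2 : R ^ 2 = 1 + Real.sin (2 * θ) ^ 2 := Real.sq_sqrt (by positivity)
  have hRC : (R : ℂ) ≠ 0 := by exact_mod_cast hR0.ne'
  have hpyr : Real.cos θ ^ 2 + Real.sin θ ^ 2 = 1 := Real.cos_sq_add_sin_sq θ
  have hpy : (Real.cos θ : ℂ) ^ 2 + (Real.sin θ : ℂ) ^ 2 = 1 := by exact_mod_cast hpyr
  have hs2 : Real.sin (2 * θ) = 2 * Real.sin θ * Real.cos θ := by
    rw [Real.sin_two_mul]
  have hc2 : Real.cos (2 * θ) = Real.cos θ ^ 2 - Real.sin θ ^ 2 := by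
    rw [Real.cos_two_mul]
    nlinarith [hpyr]
  have hcosμ : Real.cos μ = 1 / R := by
    rw [hμ, Real.cos_arctan]
  have hsinμ : Real.sin μ = 2 * Real.sin θ * Real.cos θ / R := by
    rw [hμ, Real.sin_arctan, ← hs2]
  have hαR : α = 2 * (Real.cos θ ^ 2 - Real.sin θ ^ 2) / R := by
    rw [hα, hc2]
  have hΛ : Real.sqrt (8 + 2 * α ^ 2) = 4 / R := by
    have h1 : 8 + 2 * α ^ 2 = (4 / R) ^ 2 := by
      rw [hα]
      have hc2s2 : Real.cos (2*θ) ^ 2 = 1 - Real.sin (2*θ) ^ 2 :=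
        by nlinarith [Real.sin_sq_add_cos_sq (2*θ)]
      field_simp
      nlinarith [hR2, hc2s2]
    rw [h1, Real.sqrt_sq (by positivity)]
  have hcmu : (Real.cos μ : ℂ) = 1 / R := by rw [hcosμ]; push_cast; ring
  have hsmu : (Real.sin μ : ℂ) = 2 * Real.cos θ * Real.sin θ / R := by
    rw [hsinμ]; push_cast; ring
  have hAC : (α : ℂ) = 2 * ((Real.cos θ : ℂ) ^ 2 - (Real.sin θ : ℂ) ^ 2) / R := by
    rw [hαR]; push_cast; ring
  have hW0 : Wop α μ 0 =
      (α : ℂ) • (sZ ⊗ₖ 1) + sZ ⊗ₖ Bobs μ 0 + sZ ⊗ₖ Bobs μ 1 + sX ⊗ₖ Bobs μ 0 - sX ⊗ₖ Bobs μ 1 := by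
    simp [Wop]
  have hW1 : Wop α μ 1 =
      -((α : ℂ) • (sZ ⊗ₖ 1)) + sZ ⊗ₖ Bobs μ 0 + sZ ⊗ₖ Bobs μ 1 - sX ⊗ₖ Bobs μ 0 + sX ⊗ₖ Bobs μ 1 := by
    simp [Wop]
  have hW2 : Wop α μ 2 = -(Wop α μ 1) := by
    rw [hW1]; simp [Wop]
  have hW3 : Wop α μ 3 = -(Wop α μ 0) := by
    rw [hW0]; simp [Wop]
  have hH0 : (Wop α μ 0).IsHermitian := by
    rw [hW0]
    unfold Matrix.IsHermitian
    ext ⟨i, j⟩ ⟨k, l⟩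
    fin_cases i <;> fin_cases j <;> fin_cases k <;> fin_cases l <;>
      simp [Matrix.conjTranspose_apply, Bobs, sZ, sX, Matrix.one_apply,
        -Complex.ofReal_cos, -Complex.ofReal_sin, Complex.conj_ofReal]
  have hH1 : (Wop α μ 1).IsHermitian := by
    rw [hW1]
    unfold Matrix.IsHermitian
    ext ⟨i, j⟩ ⟨k, l⟩
    fin_cases i <;> fin_cases j <;> fin_cases k <;> fin_cases l <;>
      simp [Matrix.conjTranspose_apply, Bobs, sZ, sX, Matrix.one_apply,
        -Complex.ofReal_cos, -Complex.ofReal_sin, Complex.conj_ofReal]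
  have hH2 : (Wop α μ 2).IsHermitian := by rw [hW2]; exact hH1.neg
  have hH3 : (Wop α μ 3).IsHermitian := by rw [hW3]; exact hH0.neg
  have hcomp : ∀ p q : Fin 2 × Fin 2,
      ∑ i : Fin 4, bellV θ i q * (starRingEnd ℂ) (bellV θ i p) = if p = q then 1 else 0 := by
    rintro ⟨p1, p2⟩ ⟨q1, q2⟩
    fin_cases p1 <;> fin_cases p2 <;> fin_cases q1 <;> fin_cases q2 <;>
      simp [Fin.sum_univ_four, bellV, Prod.ext_iff, Complex.conj_ofReal,
        -Complex.ofReal_cos, -Complex.ofReal_sin] <;>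
      first
      | ring1
      | linear_combination hpy
      | linear_combination -hpy
  have hE00 : (Wop α μ 0).mulVec (bellV θ 0) = ((4 / R : ℝ) : ℂ) • bellV θ 0 := by
    rw [hW0]
    funext ⟨i, j⟩
    fin_cases i <;> fin_cases j <;>
      simp [Matrix.mulVec, dotProduct, Fintype.sum_prod_type, Fin.sum_univ_two,
        Bobs, sZ, sX, bellV, Matrix.one_apply, Prod.ext_iff, hcmu, hsmu, hAC,
        -Complex.ofReal_cos, -Complex.ofReal_sin] <;>
      push_cast [-Complex.ofReal_cos, -Complex.ofReal_sin] <;>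
      first
      | ring1
      | linear_combination (2*(Real.cos θ:ℂ)/(R:ℂ)) * hpy
      | linear_combination (-(2*(Real.cos θ:ℂ))/(R:ℂ)) * hpy
      | linear_combination (2*(Real.sin θ:ℂ)/(R:ℂ)) * hpy
      | linear_combination (-(2*(Real.sin θ:ℂ))/(R:ℂ)) * hpy
      | linear_combination (4*(Real.cos θ:ℂ)/(R:ℂ)) * hpy
      | linear_combination (-(4*(Real.cos θ:ℂ))/(R:ℂ)) * hpy
      | linear_combination (4*(Real.sin θ:ℂ)/(R:ℂ)) * hpy
      | linear_combination (-(4*(Real.sin θ:ℂ))/(R:ℂ)) * hpy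
  have hE01 : (Wop α μ 0).mulVec (bellV θ 1) = (((0 : ℝ) : ℝ) : ℂ) • bellV θ 1 := by
    rw [hW0]
    funext ⟨i, j⟩
    fin_cases i <;> fin_cases j <;>
      simp [Matrix.mulVec, dotProduct, Fintype.sum_prod_type, Fin.sum_univ_two,
        Bobs, sZ, sX, bellV, Matrix.one_apply, Prod.ext_iff, hcmu, hsmu, hAC,
        -Complex.ofReal_cos, -Complex.ofReal_sin] <;>
      push_cast [-Complex.ofReal_cos, -Complex.ofReal_sin] <;>
      first
      | ring1
      | linear_combination (2*(Real.cos θ:ℂ)/(R:ℂ)) * hpy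
      | linear_combination (-(2*(Real.cos θ:ℂ))/(R:ℂ)) * hpy
      | linear_combination (2*(Real.sin θ:ℂ)/(R:ℂ)) * hpy
      | linear_combination (-(2*(Real.sin θ:ℂ))/(R:ℂ)) * hpy
      | linear_combination (4*(Real.cos θ:ℂ)/(R:ℂ)) * hpy
      | linear_combination (-(4*(Real.cos θ:ℂ))/(R:ℂ)) * hpy
      | linear_combination (4*(Real.sin θ:ℂ)/(R:ℂ)) * hpy
      | linear_combination (-(4*(Real.sin θ:ℂ))/(R:ℂ)) * hpy
  have hE02 : (Wop α μ 0).mulVec (bellV θ 2) = (((0 : ℝ) : ℝ) : ℂ) • bellV θ 2 := by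
    rw [hW0]
    funext ⟨i, j⟩
    fin_cases i <;> fin_cases j <;>
      simp [Matrix.mulVec, dotProduct, Fintype.sum_prod_type, Fin.sum_univ_two,
        Bobs, sZ, sX, bellV, Matrix.one_apply, Prod.ext_iff, hcmu, hsmu, hAC,
        -Complex.ofReal_cos, -Complex.ofReal_sin] <;>
      push_cast [-Complex.ofReal_cos, -Complex.ofReal_sin] <;>
      first
      | ring1
      | linear_combination (2*(Real.cos θ:ℂ)/(R:ℂ)) * hpy
      | linear_combination (-(2*(Real.cos θ:ℂ))/(R:ℂ)) * hpy
      | linear_combination (2*(Real.sin θ:ℂ)/(R:ℂ)) * hpy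
      | linear_combination (-(2*(Real.sin θ:ℂ))/(R:ℂ)) * hpy
      | linear_combination (4*(Real.cos θ:ℂ)/(R:ℂ)) * hpy
      | linear_combination (-(4*(Real.cos θ:ℂ))/(R:ℂ)) * hpy
      | linear_combination (4*(Real.sin θ:ℂ)/(R:ℂ)) * hpy
      | linear_combination (-(4*(Real.sin θ:ℂ))/(R:ℂ)) * hpy
  have hE03 : (Wop α μ 0).mulVec (bellV θ 3) = ((-(4 / R) : ℝ) : ℂ) • bellV θ 3 := by
    rw [hW0]
    funext ⟨i, j⟩
    fin_cases i <;> fin_cases j <;>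
      simp [Matrix.mulVec, dotProduct, Fintype.sum_prod_type, Fin.sum_univ_two,
        Bobs, sZ, sX, bellV, Matrix.one_apply, Prod.ext_iff, hcmu, hsmu, hAC,
        -Complex.ofReal_cos, -Complex.ofReal_sin] <;>
      push_cast [-Complex.ofReal_cos, -Complex.ofReal_sin] <;>
      first
      | ring1
      | linear_combination (2*(Real.cos θ:ℂ)/(R:ℂ)) * hpy
      | linear_combination (-(2*(Real.cos θ:ℂ))/(R:ℂ)) * hpy
      | linear_combination (2*(Real.sin θ:ℂ)/(R:ℂ)) * hpy
      | linear_combination (-(2*(Real.sin θ:ℂ))/(R:ℂ)) * hpy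
      | linear_combination (4*(Real.cos θ:ℂ)/(R:ℂ)) * hpy
      | linear_combination (-(4*(Real.cos θ:ℂ))/(R:ℂ)) * hpy
      | linear_combination (4*(Real.sin θ:ℂ)/(R:ℂ)) * hpy
      | linear_combination (-(4*(Real.sin θ:ℂ))/(R:ℂ)) * hpy
  have hE10 : (Wop α μ 1).mulVec (bellV θ 0) = (((0 : ℝ) : ℝ) : ℂ) • bellV θ 0 := by
    rw [hW1]
    funext ⟨i, j⟩
    fin_cases i <;> fin_cases j <;>
      simp [Matrix.mulVec, dotProduct, Fintype.sum_prod_type, Fin.sum_univ_two,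
        Bobs, sZ, sX, bellV, Matrix.one_apply, Prod.ext_iff, hcmu, hsmu, hAC,
        -Complex.ofReal_cos, -Complex.ofReal_sin] <;>
      push_cast [-Complex.ofReal_cos, -Complex.ofReal_sin] <;>
      first
      | ring1
      | linear_combination (2*(Real.cos θ:ℂ)/(R:ℂ)) * hpy
      | linear_combination (-(2*(Real.cos θ:ℂ))/(R:ℂ)) * hpy
      | linear_combination (2*(Real.sin θ:ℂ)/(R:ℂ)) * hpy
      | linear_combination (-(2*(Real.sin θ:ℂ))/(R:ℂ)) * hpy
      | linear_combination (4*(Real.cos θ:ℂ)/(R:ℂ)) * hpy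
      | linear_combination (-(4*(Real.cos θ:ℂ))/(R:ℂ)) * hpy
      | linear_combination (4*(Real.sin θ:ℂ)/(R:ℂ)) * hpy
      | linear_combination (-(4*(Real.sin θ:ℂ))/(R:ℂ)) * hpy
  have hE11 : (Wop α μ 1).mulVec (bellV θ 1) = ((4 / R : ℝ) : ℂ) • bellV θ 1 := by
    rw [hW1]
    funext ⟨i, j⟩
    fin_cases i <;> fin_cases j <;>
      simp [Matrix.mulVec, dotProduct, Fintype.sum_prod_type, Fin.sum_univ_two,
        Bobs, sZ, sX, bellV, Matrix.one_apply, Prod.ext_iff, hcmu, hsmu, hAC,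
        -Complex.ofReal_cos, -Complex.ofReal_sin] <;>
      push_cast [-Complex.ofReal_cos, -Complex.ofReal_sin] <;>
      first
      | ring1
      | linear_combination (2*(Real.cos θ:ℂ)/(R:ℂ)) * hpy
      | linear_combination (-(2*(Real.cos θ:ℂ))/(R:ℂ)) * hpy
      | linear_combination (2*(Real.sin θ:ℂ)/(R:ℂ)) * hpy
      | linear_combination (-(2*(Real.sin θ:ℂ))/(R:ℂ)) * hpy
      | linear_combination (4*(Real.cos θ:ℂ)/(R:ℂ)) * hpy
      | linear_combination (-(4*(Real.cos θ:ℂ))/(R:ℂ)) * hpy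
      | linear_combination (4*(Real.sin θ:ℂ)/(R:ℂ)) * hpy
      | linear_combination (-(4*(Real.sin θ:ℂ))/(R:ℂ)) * hpy
  have hE12 : (Wop α μ 1).mulVec (bellV θ 2) = ((-(4 / R) : ℝ) : ℂ) • bellV θ 2 := by
    rw [hW1]
    funext ⟨i, j⟩
    fin_cases i <;> fin_cases j <;>
      simp [Matrix.mulVec, dotProduct, Fintype.sum_prod_type, Fin.sum_univ_two,
        Bobs, sZ, sX, bellV, Matrix.one_apply, Prod.ext_iff, hcmu, hsmu, hAC,
        -Complex.ofReal_cos, -Complex.ofReal_sin] <;>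
      push_cast [-Complex.ofReal_cos, -Complex.ofReal_sin] <;>
      first
      | ring1
      | linear_combination (2*(Real.cos θ:ℂ)/(R:ℂ)) * hpy
      | linear_combination (-(2*(Real.cos θ:ℂ))/(R:ℂ)) * hpy
      | linear_combination (2*(Real.sin θ:ℂ)/(R:ℂ)) * hpy
      | linear_combination (-(2*(Real.sin θ:ℂ))/(R:ℂ)) * hpy
      | linear_combination (4*(Real.cos θ:ℂ)/(R:ℂ)) * hpy
      | linear_combination (-(4*(Real.cos θ:ℂ))/(R:ℂ)) * hpy
      | linear_combination (4*(Real.sin θ:ℂ)/(R:ℂ)) * hpy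
      | linear_combination (-(4*(Real.sin θ:ℂ))/(R:ℂ)) * hpy
  have hE13 : (Wop α μ 1).mulVec (bellV θ 3) = (((0 : ℝ) : ℝ) : ℂ) • bellV θ 3 := by
    rw [hW1]
    funext ⟨i, j⟩
    fin_cases i <;> fin_cases j <;>
      simp [Matrix.mulVec, dotProduct, Fintype.sum_prod_type, Fin.sum_univ_two,
        Bobs, sZ, sX, bellV, Matrix.one_apply, Prod.ext_iff, hcmu, hsmu, hAC,
        -Complex.ofReal_cos, -Complex.ofReal_sin] <;>
      push_cast [-Complex.ofReal_cos, -Complex.ofReal_sin] <;>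
      first
      | ring1
      | linear_combination (2*(Real.cos θ:ℂ)/(R:ℂ)) * hpy
      | linear_combination (-(2*(Real.cos θ:ℂ))/(R:ℂ)) * hpy
      | linear_combination (2*(Real.sin θ:ℂ)/(R:ℂ)) * hpy
      | linear_combination (-(2*(Real.sin θ:ℂ))/(R:ℂ)) * hpy
      | linear_combination (4*(Real.cos θ:ℂ)/(R:ℂ)) * hpy
      | linear_combination (-(4*(Real.cos θ:ℂ))/(R:ℂ)) * hpy
      | linear_combination (4*(Real.sin θ:ℂ)/(R:ℂ)) * hpy
      | linear_combination (-(4*(Real.sin θ:ℂ))/(R:ℂ)) * hpy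
  have hΛpos : 0 < 4 / R := by positivity
  have heig0 : ∀ i : Fin 4, (Wop α μ 0).mulVec (bellV θ i) =
      ((![4/R, 0, 0, -(4/R)] i : ℝ) : ℂ) • bellV θ i := by
    intro i
    fin_cases i
    · simpa using hE00
    · simpa using hE01
    · simpa using hE02
    · simpa using hE03
  have heig1 : ∀ i : Fin 4, (Wop α μ 1).mulVec (bellV θ i) =
      ((![0, 4/R, -(4/R), 0] i : ℝ) : ℂ) • bellV θ i := by
    intro i
    fin_cases i
    · simpa using hE10
    · simpa using hE11
    · simpa using hE12
    · simpa using hE13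
  have heig2 : ∀ i : Fin 4, (Wop α μ 2).mulVec (bellV θ i) =
      ((![0, -(4/R), 4/R, 0] i : ℝ) : ℂ) • bellV θ i := by
    have hneg : ∀ i : Fin 4, ![0, -(4/R), 4/R, 0] i = -(![0, 4/R, -(4/R), 0] i) := by
      intro i; fin_cases i <;> norm_num
    intro i
    rw [hW2, Matrix.neg_mulVec, heig1 i, hneg i]
    push_cast
    module
  have heig3 : ∀ i : Fin 4, (Wop α μ 3).mulVec (bellV θ i) =
      ((![-(4/R), 0, 0, 4/R] i : ℝ) : ℂ) • bellV θ i := by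
    have hneg : ∀ i : Fin 4, ![-(4/R), 0, 0, 4/R] i = -(![4/R, 0, 0, -(4/R)] i) := by
      intro i; fin_cases i <;> norm_num
    intro i
    rw [hW3, Matrix.neg_mulVec, heig0 i, hneg i]
    push_cast
    module
  intro b
  fin_cases b
  · refine ⟨hH0, ?_, ?_, ?_⟩
    · rw [hΛ]; exact hE00
    · rw [hΛ]
      have := (spectral_aux (Wop α μ 0) hH0 (bellV θ) ![4/R, 0, 0, -(4/R)]
        heig0 hcomp 0
        (by intro i hi; fin_cases i <;> norm_num <;> first | exact absurd (by decide) hi | linarith [hΛpos, hR0])).1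
      simpa using this
    · rw [hΛ]
      have := (spectral_aux (Wop α μ 0) hH0 (bellV θ) ![4/R, 0, 0, -(4/R)]
        heig0 hcomp 0
        (by intro i hi; fin_cases i <;> norm_num <;> first | exact absurd (by decide) hi | linarith [hΛpos, hR0])).2
      simpa using this
  · refine ⟨hH1, ?_, ?_, ?_⟩
    · rw [hΛ]; exact hE11
    · rw [hΛ]
      have := (spectral_aux (Wop α μ 1) hH1 (bellV θ) ![0, 4/R, -(4/R), 0]
        heig1 hcomp 1
        (by intro i hi; fin_cases i <;> norm_num <;> first | exact absurd (by decide) hi | linarith [hΛpos, hR0])).1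
      simpa using this
    · rw [hΛ]
      have := (spectral_aux (Wop α μ 1) hH1 (bellV θ) ![0, 4/R, -(4/R), 0]
        heig1 hcomp 1
        (by intro i hi; fin_cases i <;> norm_num <;> first | exact absurd (by decide) hi | linarith [hΛpos, hR0])).2
      simpa using this
  · refine ⟨hH2, ?_, ?_, ?_⟩
    · rw [hΛ]
      simpa using heig2 2
    · rw [hΛ]
      have := (spectral_aux (Wop α μ 2) hH2 (bellV θ) ![0, -(4/R), 4/R, 0]
        heig2 hcomp 2
        (by intro i hi; fin_cases i <;> norm_num <;> first | exact absurd (by decide) hi | linarith [hΛpos, hR0, (show (![0, -(4/R), 4/R, 0] : Fin 4 → ℝ) 2 = 4/R from rfl)])).1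
      simpa using this
    · rw [hΛ]
      have := (spectral_aux (Wop α μ 2) hH2 (bellV θ) ![0, -(4/R), 4/R, 0]
        heig2 hcomp 2
        (by intro i hi; fin_cases i <;> norm_num <;> first | exact absurd (by decide) hi | linarith [hΛpos, hR0, (show (![0, -(4/R), 4/R, 0] : Fin 4 → ℝ) 2 = 4/R from rfl)])).2
      simpa using this
  · refine ⟨hH3, ?_, ?_, ?_⟩
    · rw [hΛ]
      simpa using heig3 3
    · rw [hΛ]
      have := (spectral_aux (Wop α μ 3) hH3 (bellV θ) ![-(4/R), 0, 0, 4/R]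
        heig3 hcomp 3
        (by intro i hi; fin_cases i <;> norm_num <;> first | exact absurd (by decide) hi | linarith [hΛpos, hR0, (show (![-(4/R), 0, 0, 4/R] : Fin 4 → ℝ) 3 = 4/R from rfl)])).1
      simpa using this
    · rw [hΛ]
      have := (spectral_aux (Wop α μ 3) hH3 (bellV θ) ![-(4/R), 0, 0, 4/R]
        heig3 hcomp 3
        (by intro i hi; fin_cases i <;> norm_num <;> first | exact absurd (by decide) hi | linarith [hΛpos, hR0, (show (![-(4/R), 0, 0, 4/R] : Fin 4 → ℝ) 3 = 4/R from rfl)])).2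
      simpa using this

end
end

section
/- Let α ∈ [0, 2), let H_A and H_B be finite-dimensional complex Hilbert spaces, let A_0, A_1 be self-adjoint unitary operators on H_A and B_0, B_1 self-adjoint unitary operators on H_B. Then for every unit vector |ψ⟩ ∈ H_A⊗H_B, ⟨ψ| α A_0⊗I + A_0⊗B_0 + A_0⊗B_1 + A_1⊗B_0 − A_1⊗B_1 |ψ⟩ ≤ √(8+2α²). (The maximal quantum value of the tilted CHSH expression is √(8+2α²).) -/
open scoped BigOperators Kronecker ComplexOrder
open Matrix

noncomputable section

private lemma kron_conjTranspose {m n : ℕ} (A : Matrix (Fin m) (Fin m) ℂ)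
    (B : Matrix (Fin n) (Fin n) ℂ) : (A ⊗ₖ B)ᴴ = Aᴴ ⊗ₖ Bᴴ := by
  ext ⟨i1, i2⟩ ⟨j1, j2⟩
  simp [Matrix.conjTranspose_apply, Matrix.kroneckerMap_apply, star_mul']

private lemma kron_sub {m n : ℕ} (A : Matrix (Fin m) (Fin m) ℂ)
    (B C : Matrix (Fin n) (Fin n) ℂ) : A ⊗ₖ (B - C) = A ⊗ₖ B - A ⊗ₖ C := by
  ext ⟨i1, i2⟩ ⟨j1, j2⟩
  simp [Matrix.kroneckerMap_apply, Matrix.sub_apply, mul_sub]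

private lemma kron_neg {m n : ℕ} (A : Matrix (Fin m) (Fin m) ℂ)
    (B : Matrix (Fin n) (Fin n) ℂ) : A ⊗ₖ (-B) = -(A ⊗ₖ B) := by
  ext ⟨i1, i2⟩ ⟨j1, j2⟩
  simp [Matrix.kroneckerMap_apply]

/-- the tilted-CHSH Tsirelson bound: for any dichotomic (self-adjoint
unitary) observables `A_0, A_1` on `H_A` and `B_0, B_1` on `H_B` and any unit vector
`|ψ⟩ ∈ H_A ⊗ H_B`,
`⟨ψ| α A_0⊗I + A_0⊗B_0 + A_0⊗B_1 + A_1⊗B_0 - A_1⊗B_1 |ψ⟩ ≤ √(8+2α²)` for `α ∈ [0,2)`. -/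
theorem stmt_5 (α : ℝ) (hα : 0 ≤ α) (hα2 : α < 2) (m n : ℕ)
    (A : Fin 2 → Matrix (Fin m) (Fin m) ℂ) (B : Fin 2 → Matrix (Fin n) (Fin n) ℂ)
    (hAherm : ∀ a, (A a).IsHermitian) (hAunit : ∀ a, A a * A a = 1)
    (hBherm : ∀ b, (B b).IsHermitian) (hBunit : ∀ b, B b * B b = 1)
    (ψ : Fin m × Fin n → ℂ) (hψ : star ψ ⬝ᵥ ψ = 1) :
    star ψ ⬝ᵥ
        ((α : ℂ) • (A 0 ⊗ₖ (1 : Matrix (Fin n) (Fin n) ℂ)) +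
          A 0 ⊗ₖ B 0 + A 0 ⊗ₖ B 1 + A 1 ⊗ₖ B 0 - A 1 ⊗ₖ B 1).mulVec ψ ≤
      (Real.sqrt (8 + 2 * α ^ 2) : ℂ) := by
  set β : ℝ := Real.sqrt (8 + 2 * α ^ 2) with hβdef
  have hβsq : β ^ 2 = 8 + 2 * α ^ 2 := Real.sq_sqrt (by positivity)
  have hβpos : (0:ℝ) < β := Real.sqrt_pos.2 (by positivity)
  set C : Matrix (Fin n) (Fin n) ℂ := (α : ℂ) • 1 + B 0 + B 1 with hC
  set D : Matrix (Fin n) (Fin n) ℂ := B 0 - B 1 with hD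
  set C' : Matrix (Fin n) (Fin n) ℂ := B 0 + B 1 - (α : ℂ) • 1 with hC'
  set M : Matrix (Fin m × Fin n) (Fin m × Fin n) ℂ :=
    (α : ℂ) • (A 0 ⊗ₖ (1 : Matrix (Fin n) (Fin n) ℂ)) +
      A 0 ⊗ₖ B 0 + A 0 ⊗ₖ B 1 + A 1 ⊗ₖ B 0 - A 1 ⊗ₖ B 1 with hM
  have hMCD : M = A 0 ⊗ₖ C + A 1 ⊗ₖ D := by
    rw [hM, hC, hD]
    simp only [Matrix.kronecker_add, kron_sub, Matrix.kronecker_smul]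
    abel
  set Q : Matrix (Fin m × Fin n) (Fin m × Fin n) ℂ := A 0 ⊗ₖ D + A 1 ⊗ₖ C' with hQ
  -- B-side algebra
  have hCD : C * D = -(D * C') := by
    rw [hC, hD, hC']
    simp only [add_mul, mul_add, sub_mul, mul_sub, smul_mul_assoc, mul_smul_comm,
      one_mul, mul_one, Matrix.one_mul, Matrix.mul_one, hBunit 0, hBunit 1]
    module
  have hDC : D * C = -(C' * D) := by
    rw [hC, hD, hC']
    simp only [add_mul, mul_add, sub_mul, mul_sub, smul_mul_assoc, mul_smul_comm,
      one_mul, mul_one, Matrix.one_mul, Matrix.mul_one, hBunit 0, hBunit 1]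
    module
  have hsum : C * C + D * D + (D * D + C' * C') = ((8 : ℂ) + 2 * (α:ℂ) ^ 2) • 1 := by
    rw [hC, hD, hC']
    simp only [add_mul, mul_add, sub_mul, mul_sub, smul_mul_assoc, mul_smul_comm,
      one_mul, mul_one, Matrix.one_mul, Matrix.mul_one, hBunit 0, hBunit 1, smul_smul]
    module
  have target_eq : ((8 : ℂ) + 2 * (α:ℂ) ^ 2) • (1 : Matrix (Fin m × Fin n) (Fin m × Fin n) ℂ) =
      (1 : Matrix (Fin m) (Fin m) ℂ) ⊗ₖ (C * C) + 1 ⊗ₖ (D * D) +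
        (1 ⊗ₖ (D * D) + 1 ⊗ₖ (C' * C')) := by
    rw [← Matrix.one_kronecker_one (α := ℂ) (m := Fin m) (n := Fin n),
      ← Matrix.kronecker_smul, ← hsum]
    simp only [Matrix.kronecker_add]
  -- key identity : M*M + Q*Q = (8+2α²)•1
  have key : M * M + Q * Q = ((8 : ℂ) + 2 * (α:ℂ) ^ 2) • 1 := by
    rw [hMCD, hQ, target_eq]
    simp only [add_mul, mul_add, ← Matrix.mul_kronecker_mul, hAunit 0, hAunit 1,
      hCD, hDC, kron_neg]
    abel
  -- Hermitian facts
  have hCH : Cᴴ = C := by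
    rw [hC]
    simp [Matrix.conjTranspose_add, Matrix.conjTranspose_smul, (hBherm 0).eq, (hBherm 1).eq,
      Complex.star_def, Complex.conj_ofReal]
  have hDH : Dᴴ = D := by
    rw [hD]
    simp [Matrix.conjTranspose_sub, (hBherm 0).eq, (hBherm 1).eq]
  have hC'H : C'ᴴ = C' := by
    rw [hC']
    simp [Matrix.conjTranspose_sub, Matrix.conjTranspose_add, Matrix.conjTranspose_smul,
      (hBherm 0).eq, (hBherm 1).eq, Complex.star_def, Complex.conj_ofReal]
  have hMH : Mᴴ = M := by
    rw [hMCD, Matrix.conjTranspose_add, kron_conjTranspose, kron_conjTranspose,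
      (hAherm 0).eq, (hAherm 1).eq, hCH, hDH]
  have hQH : Qᴴ = Q := by
    rw [hQ, Matrix.conjTranspose_add, kron_conjTranspose, kron_conjTranspose,
      (hAherm 0).eq, (hAherm 1).eq, hDH, hC'H]
  set N : Matrix (Fin m × Fin n) (Fin m × Fin n) ℂ := (β : ℂ) • 1 - M with hN
  have hNH : Nᴴ = N := by
    rw [hN, Matrix.conjTranspose_sub, Matrix.conjTranspose_smul, Matrix.conjTranspose_one, hMH]
    norm_num [Complex.star_def, Complex.conj_ofReal]
  have hb2 : (β:ℂ) * (β:ℂ) = (8 : ℂ) + 2 * (α:ℂ) ^ 2 := by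
    have h1 : ((β:ℂ)) * (β:ℂ) = ((β ^ 2 : ℝ) : ℂ) := by push_cast; ring
    rw [h1, hβsq]; push_cast; ring
  have hNN : N * N = ((β:ℂ) * (β:ℂ)) • (1 : Matrix (Fin m × Fin n) (Fin m × Fin n) ℂ) -
      (β:ℂ) • M - (β:ℂ) • M + M * M := by
    rw [hN]
    simp only [sub_mul, mul_sub, smul_mul_assoc, mul_smul_comm, Matrix.one_mul,
      Matrix.mul_one, smul_smul]
    module
  have key2 : N * N + Q * Q = ((2 * β : ℝ) : ℂ) • N := by
    calc N * N + Q * Q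
        = ((β:ℂ) * (β:ℂ)) • (1 : Matrix (Fin m × Fin n) (Fin m × Fin n) ℂ) -
            (β:ℂ) • M - (β:ℂ) • M + (M * M + Q * Q) := by rw [hNN]; module
      _ = ((β:ℂ) * (β:ℂ)) • (1 : Matrix (Fin m × Fin n) (Fin m × Fin n) ℂ) -
            (β:ℂ) • M - (β:ℂ) • M + ((8 : ℂ) + 2 * (α:ℂ) ^ 2) • 1 := by rw [key]
      _ = ((2 * β : ℝ) : ℂ) • N := by rw [hN, ← hb2]; push_cast; module
  -- quadratic forms of squares are nonneg
  have quad_sq : ∀ (P : Matrix (Fin m × Fin n) (Fin m × Fin n) ℂ), Pᴴ = P →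
      0 ≤ star ψ ⬝ᵥ (P * P).mulVec ψ := by
    intro P hP
    have h : star ψ ⬝ᵥ (P * P).mulVec ψ = star (P.mulVec ψ) ⬝ᵥ (P.mulVec ψ) := by
      rw [← Matrix.mulVec_mulVec, Matrix.dotProduct_mulVec, Matrix.star_mulVec, hP]
    rw [h]
    exact dotProduct_star_self_nonneg _
  have hpos : 0 ≤ star ψ ⬝ᵥ (((2 * β : ℝ) : ℂ) • N).mulVec ψ := by
    rw [← key2, Matrix.add_mulVec, dotProduct_add]
    exact add_nonneg (quad_sq N hNH) (quad_sq Q hQH)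
  set x : ℂ := star ψ ⬝ᵥ M.mulVec ψ with hx
  have hNval : star ψ ⬝ᵥ N.mulVec ψ = (β:ℂ) - x := by
    rw [hN, Matrix.sub_mulVec, dotProduct_sub, Matrix.smul_mulVec, Matrix.one_mulVec,
      dotProduct_smul, hψ, smul_eq_mul, mul_one]
  have e : star ψ ⬝ᵥ (((2 * β : ℝ) : ℂ) • N).mulVec ψ = ((2 * β : ℝ) : ℂ) * ((β:ℂ) - x) := by
    rw [Matrix.smul_mulVec, dotProduct_smul, hNval, smul_eq_mul]
  rw [e] at hpos
  -- extract real/imaginary parts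
  rw [Complex.le_def] at hpos
  obtain ⟨h1, h2⟩ := hpos
  simp only [Complex.zero_re, Complex.zero_im, Complex.mul_re, Complex.mul_im,
    Complex.ofReal_re, Complex.ofReal_im, Complex.sub_re, Complex.sub_im,
    zero_mul, mul_zero, add_zero, zero_add, zero_sub, sub_zero] at h1 h2
  have him : x.im = 0 := by
    rcases mul_eq_zero.mp h2.symm with h | h
    · linarith
    · linarith
  have hre : x.re ≤ β := by nlinarith [h1, him]
  rw [Complex.le_def]
  constructor
  · simpa using hre
  · simp [him]

end
end

section
/- Let θ ∈ (0, π/4], μ = arctan(sin 2θ), and α = 2cos(2θ)/√(1+sin²(2θ)). With the ideal observables A_0 = σ_Z, A_1 = σ_X on the first qubit and B_0 = cos(μ)σ_Z + sin(μ)σ_X, B_1 = cos(μ)σ_Z − sin(μ)σ_X on the second qubit, the state |Φ⟩ = cosθ|00⟩ − sinθ|11⟩ = (σ_Z⊗I)|Bell⁰_θ⟩ satisfies ⟨Φ| α A_0⊗I + A_0⊗B_0 + A_0⊗B_1 − A_1⊗B_0 + A_1⊗B_1 |Φ⟩ = √(8+2α²). -/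
open scoped BigOperators Kronecker
open Matrix

noncomputable section

/-- `|Bell⁰_θ⟩ = cos θ |00⟩ + sin θ |11⟩`. -/
def bell0 (θ : ℝ) : Fin 2 × Fin 2 → ℂ :=
  fun p => if p = (0, 0) then (Real.cos θ : ℂ) else if p = (1, 1) then (Real.sin θ : ℂ) else 0

/-- `|Φ⟩ = cos θ |00⟩ - sin θ |11⟩`. -/
def PhiV (θ : ℝ) : Fin 2 × Fin 2 → ℂ :=
  fun p => if p = (0, 0) then (Real.cos θ : ℂ) else if p = (1, 1) then -(Real.sin θ : ℂ) else 0

lemma key_s6 (c s : ℝ) (h : c ^ 2 + s ^ 2 = 1) :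
    2 * c / Real.sqrt (1 + s ^ 2) * c + 2 / Real.sqrt (1 + s ^ 2)
      + 2 * s ^ 2 / Real.sqrt (1 + s ^ 2)
      = Real.sqrt (8 + 2 * (2 * c / Real.sqrt (1 + s ^ 2)) ^ 2) := by
  have h1 : (0:ℝ) < 1 + s ^ 2 := by positivity
  set S := Real.sqrt (1 + s ^ 2) with hS
  have hS0 : 0 < S := Real.sqrt_pos.mpr h1
  have hS2 : S ^ 2 = 1 + s ^ 2 := Real.sq_sqrt h1.le
  have hLHS : 2 * c / S * c + 2 / S + 2 * s ^ 2 / S = 4 / S := by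
    field_simp
    nlinarith [h]
  rw [hLHS]
  have : 8 + 2 * (2 * c / S) ^ 2 = (4 / S) ^ 2 := by
    field_simp
    nlinarith [hS2]
  rw [this, Real.sqrt_sq (by positivity)]

/-- with `A_0 = σ_Z`, `A_1 = σ_X`, the state
`|Φ⟩ = cos θ|00⟩ - sin θ|11⟩ = (σ_Z ⊗ I)|Bell⁰_θ⟩` maximally violates the corresponding
tilted CHSH expression:
`⟨Φ| α A_0⊗I + A_0⊗B_0 + A_0⊗B_1 - A_1⊗B_0 + A_1⊗B_1 |Φ⟩ = √(8+2α²)`. -/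
theorem stmt_6 (θ μ α : ℝ) (hθ : θ ∈ Set.Ioc 0 (Real.pi / 4))
    (hμ : μ = Real.arctan (Real.sin (2 * θ)))
    (hα : α = 2 * Real.cos (2 * θ) / Real.sqrt (1 + Real.sin (2 * θ) ^ 2)) :
    PhiV θ = (sZ ⊗ₖ (1 : Matrix (Fin 2) (Fin 2) ℂ)).mulVec (bell0 θ) ∧
    star (PhiV θ) ⬝ᵥ
        ((α : ℂ) • (sZ ⊗ₖ (1 : Matrix (Fin 2) (Fin 2) ℂ)) +
          sZ ⊗ₖ Bobs μ 0 + sZ ⊗ₖ Bobs μ 1 - sX ⊗ₖ Bobs μ 0 + sX ⊗ₖ Bobs μ 1).mulVec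
        (PhiV θ) =
      (Real.sqrt (8 + 2 * α ^ 2) : ℂ) := by
  constructor
  · funext p
    obtain ⟨i, j⟩ := p
    fin_cases i <;> fin_cases j <;>
      simp [PhiV, bell0, sZ, sX, mulVec, dotProduct, Fintype.sum_prod_type,
        Fin.sum_univ_succ, kroneckerMap_apply, Matrix.one_apply, Prod.ext_iff]
  · have hcos : Real.cos μ = 1 / Real.sqrt (1 + Real.sin (2*θ) ^ 2) := by
      rw [hμ, Real.cos_arctan]
    have hsin : Real.sin μ = Real.sin (2*θ) / Real.sqrt (1 + Real.sin (2*θ) ^ 2) := by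
      rw [hμ, Real.sin_arctan]
    have hkey := key_s6 (Real.cos (2*θ)) (Real.sin (2*θ)) (by
      have := Real.sin_sq_add_cos_sq (2*θ); linarith)
    simp only [PhiV, sZ, sX, Bobs, mulVec, dotProduct, Fintype.sum_prod_type,
      Fin.sum_univ_succ, Fin.sum_univ_zero, kroneckerMap_apply, Matrix.one_apply]
    norm_num [Prod.ext_iff, Matrix.cons_val_zero, Matrix.cons_val_one]
    simp only [PhiV, show ((0:Fin 2 × Fin 2)) = ((0,0) : Fin 2 × Fin 2) from rfl,
      show ((1:Fin 2 × Fin 2)) = ((1,1) : Fin 2 × Fin 2) from rfl, if_pos rfl]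
    norm_num [Prod.ext_iff]
    simp only [← Complex.ofReal_cos, ← Complex.ofReal_sin, Complex.conj_ofReal]
    push_cast
    norm_cast
    rw [hα, ← hkey, hcos, hsin, Real.cos_two_mul', Real.sin_two_mul]
    have hpyth := Real.sin_sq_add_cos_sq θ
    linear_combination (2 / Real.sqrt (1 + (2 * Real.sin θ * Real.cos θ) ^ 2)) * hpyth

end
end
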